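/- arXiv:1111.3508 — 2 statements merged into one kernel-verified Lean document; each statement's English description precedes it below -/
import Mathlib

section
/- Let k have characteristic zero, ψ_n(h) = ∏_{m=1}^n (h-(m-1)) ∈ k[h], and (s.q)(h) = q(-h-2). A polynomial q ∈ k[h] satisfies (s.ψ_n)·q = ψ_n·(s.q) if and only if ψ_n divides q and the quotient p = q/ψ_n satisfies s.p = p. -/
open Polynomial Finset

/-- The translated reflection action `(s.q)(h) = q(-h-2)` on `k[h]`. -/
noncomputable def sdot {k : Type*} [CommRing k] (q : k[X]) : k[X] :=
  q.comp (-X - 2)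

/-- `ψ_n(h) = ∏_{m=1}^n (h - (m-1)) = ∏_{m=0}^{n-1} (h - m)`. -/
noncomputable def psi (k : Type*) [CommRing k] (n : ℕ) : k[X] :=
  ∏ m ∈ Finset.range n, (X - C (m : k))

lemma sdot_mul {k : Type*} [CommRing k] (a b : k[X]) : sdot (a * b) = sdot a * sdot b :=
  mul_comp a b _

lemma sdot_sdot {k : Type*} [CommRing k] (q : k[X]) : sdot (sdot q) = q := by
  simp [sdot, comp_assoc]

lemma psi_ne_zero (k : Type*) [Field k] [CharZero k] (n : ℕ) : psi k n ≠ 0 :=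
  (monic_prod_of_monic _ _ fun m _ => monic_X_sub_C _).ne_zero

lemma sdot_psi (k : Type*) [CommRing k] (n : ℕ) :
    sdot (psi k n) = ∏ m ∈ Finset.range n, -(X - C (-(2 + (m : k)))) := by
  rw [psi, sdot, Polynomial.prod_comp]
  refine Finset.prod_congr rfl fun m _ => ?_
  simp only [sub_comp, X_comp, C_comp, map_neg, map_add, map_ofNat]
  ring

lemma psi_coprime (k : Type*) [Field k] [CharZero k] (n : ℕ) :
    IsCoprime (psi k n) (sdot (psi k n)) := by
  rw [sdot_psi, psi]
  refine IsCoprime.prod_left fun i _ => IsCoprime.prod_right fun j _ => ?_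
  refine (isCoprime_X_sub_C_of_isUnit_sub ?_).neg_right
  rw [isUnit_iff_ne_zero]
  have : ((i : k) - (-(2 + j))) = ((i + 2 + j : ℕ) : k) := by push_cast; ring
  rw [this]
  exact_mod_cast (by omega : i + 2 + j ≠ 0)

/-- `q` satisfies `(s.ψ_n)·q = ψ_n·(s.q)` iff `ψ_n ∣ q` and the quotient
`p = q/ψ_n` is `s.`-invariant. -/
theorem sdot_fixed_iff (k : Type*) [Field k] [IsAlgClosed k] [CharZero k] (n : ℕ) (q : k[X]) :
    sdot (psi k n) * q = psi k n * sdot q ↔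
      ∃ p : k[X], q = psi k n * p ∧ sdot p = p := by
  have hpsi : psi k n ≠ 0 := psi_ne_zero k n
  have hspsi : sdot (psi k n) ≠ 0 := fun h => hpsi (by rw [← sdot_sdot (psi k n), h]; simp [sdot])
  constructor
  · intro h
    obtain ⟨p, rfl⟩ : psi k n ∣ q :=
      (psi_coprime k n).dvd_of_dvd_mul_left ⟨sdot q, h⟩
    refine ⟨p, rfl, ?_⟩
    rw [sdot_mul] at h
    have h2 : (sdot (psi k n) * psi k n) * sdot p = (sdot (psi k n) * psi k n) * p := by
      linear_combination -h
    exact mul_left_cancel₀ (mul_ne_zero hspsi hpsi) h2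
  · rintro ⟨p, rfl, hp⟩
    rw [sdot_mul, hp]; ring
end

section
/- Let k have characteristic zero and q ∈ k[h] satisfy q(-h-2) = -((h+2)/h)·q(h) in the sense that h·q(-h-2) = -(h+2)·q(h). Then h divides q, and p := q/h satisfies p(-h-2) = p(h). -/
open Polynomial

/-- if `h·q(-h-2) = -(h+2)·q(h)` then `h ∣ q` and `p := q/h` satisfies
`p(-h-2) = p(h)`. -/
theorem divisible_and_invariant (k : Type*) [Field k] [CharZero k] (q : k[X])
    (hq : X * q.comp (-X - 2) = -(X + 2) * q) :
    ∃ p : k[X], q = X * p ∧ p.comp (-X - 2) = p := by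
  have h0 : q.eval 0 = 0 := by
    have := congrArg (Polynomial.eval (0 : k)) hq
    simp only [eval_mul, eval_X, eval_comp, eval_neg, eval_sub, eval_ofNat, zero_mul,
      eval_add, eval_neg] at this
    have h2 : (0:k) + 2 ≠ 0 := by norm_num
    field_simp at this
    exact (mul_eq_zero.1 (by linear_combination this : (2:k) * eval 0 q = 0)).resolve_left two_ne_zero
  have hdvd : X ∣ q := by
    simpa using (dvd_iff_isRoot (p := q) (a := 0)).2 h0
  obtain ⟨p, rfl⟩ := hdvd
  refine ⟨p, rfl, ?_⟩
  have hXcomp : (X * p).comp (-X - 2) = (-X - 2) * p.comp (-X - 2) := by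
    simp [mul_comp]
  rw [hXcomp] at hq
  have key : (-(X + 2) * X) * p.comp (-X - 2) = (-(X + 2) * X) * p := by
    ring_nf
    ring_nf at hq
    linear_combination hq
  have hne : (-(X + 2) * X : k[X]) ≠ 0 := by
    intro h
    have := congrArg (Polynomial.eval (1 : k)) h
    norm_num at this
  exact mul_left_cancel₀ hne key
end
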